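/- A facet F of a facet complex Δ is a reducible leaf if and only if F is a leaf of every subset Δ' ⊆ Δ containing F. -/
import Mathlib


variable {V : Type*} [DecidableEq V]

/-- A facet complex: no facet contains another. -/
def IsFacetComplex (Δ : Finset (Finset V)) : Prop :=
  ∀ F ∈ Δ, ∀ G ∈ Δ, F ⊆ G → F = G

/-- `F` is a leaf of `Δ`. -/
def IsLeaf (Δ : Finset (Finset V)) (F : Finset V) : Prop :=
  F ∈ Δ ∧ (Δ = {F} ∨ ∃ G ∈ Δ.erase F, ∀ H ∈ Δ.erase F, H ∩ F ⊆ G ∩ F)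

/-- `Δ` is a forest: every nonempty subset has a leaf. -/
def IsForest (Δ : Finset (Finset V)) : Prop :=
  ∀ Γ ⊆ Δ, Γ.Nonempty → ∃ F, IsLeaf Γ F

/-- `Δ` is connected: any two facets are joined by a path of consecutively
intersecting facets. -/
def FCConnected (Δ : Finset (Finset V)) : Prop :=
  ∀ F ∈ Δ, ∀ G ∈ Δ,
    Relation.ReflTransGen (fun A B => A ∈ Δ ∧ B ∈ Δ ∧ (A ∩ B).Nonempty) F G

/-- A (simplicial) tree is a connected forest. -/
def IsTree (Δ : Finset (Finset V)) : Prop := FCConnected Δ ∧ IsForest Δ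

/-- A cycle: a nonempty facet complex with no leaf, every nonempty proper
subset of which has a leaf. -/
def IsCycle (Δ : Finset (Finset V)) : Prop :=
  Δ.Nonempty ∧ (¬ ∃ F, IsLeaf Δ F) ∧ ∀ Γ ⊂ Δ, Γ.Nonempty → ∃ F, IsLeaf Γ F

/-- Strong neighbors in `Δ`. -/
def StrongNeighbor (Δ : Finset (Finset V)) (F G : Finset V) : Prop :=
  F ∈ Δ ∧ G ∈ Δ ∧ F ≠ G ∧ ∀ H ∈ Δ, F ∩ G ⊆ H → H = F ∨ H = G

/-- `F` is a reducible leaf of `Δ`. -/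
def ReducibleLeaf (Δ : Finset (Finset V)) (F : Finset V) : Prop :=
  F ∈ Δ ∧ ∀ G ∈ Δ, ∀ G' ∈ Δ, G ∩ F ⊆ G' ∩ F ∨ G' ∩ F ⊆ G ∩ F

theorem reducible_leaf_iff_leaf_of_every_subset (Δ : Finset (Finset V))
    (hΔ : IsFacetComplex Δ) (F : Finset V) (hF : F ∈ Δ) :
    ReducibleLeaf Δ F ↔ ∀ Γ ⊆ Δ, F ∈ Γ → IsLeaf Γ F := by
  constructor
  · rintro ⟨-, hred⟩ Γ hΓ hFΓ
    refine ⟨hFΓ, ?_⟩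
    rcases (Γ.erase F).eq_empty_or_nonempty with he | hne
    · left
      apply Finset.eq_singleton_iff_unique_mem.mpr
      refine ⟨hFΓ, fun x hx => ?_⟩
      by_contra hxF
      exact absurd (Finset.mem_erase.mpr ⟨hxF, hx⟩) (by simp [he])
    · right
      obtain ⟨G, hG, hGmax⟩ := Γ.erase F |>.exists_max_image (fun H => (H ∩ F).card) hne
      refine ⟨G, hG, fun H hH => ?_⟩
      rcases hred H (hΓ (Finset.mem_of_mem_erase hH)) G (hΓ (Finset.mem_of_mem_erase hG))
        with h | h
      · exact h
      · have := hGmax H hH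
        have : G ∩ F = H ∩ F := Finset.eq_of_subset_of_card_le h this
        rw [← this]
  · intro h
    refine ⟨hF, fun G hG G' hG' => ?_⟩
    by_cases hGF : G = F
    · right; rw [hGF, Finset.inter_self]; exact Finset.inter_subset_right
    by_cases hG'F : G' = F
    · left; rw [hG'F, Finset.inter_self]; exact Finset.inter_subset_right
    have hleaf := h {F, G, G'} (by intro x hx; simp at hx; rcases hx with h|h|h <;> simp [h, hF, hG, hG']) (by simp)
    rcases hleaf.2 with heq | ⟨K, hK, hKmax⟩
    · exfalso
      have : G ∈ ({F} : Finset (Finset V)) := by rw [← heq]; simp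
      simp at this; exact hGF this
    · have hGmem : G ∈ ({F, G, G'} : Finset (Finset V)).erase F :=
        Finset.mem_erase.mpr ⟨hGF, by simp⟩
      have hG'mem : G' ∈ ({F, G, G'} : Finset (Finset V)).erase F :=
        Finset.mem_erase.mpr ⟨hG'F, by simp⟩
      have h1 := hKmax G hGmem
      have h2 := hKmax G' hG'mem
      have : K = G ∨ K = G' := by
        have := Finset.mem_of_mem_erase hK
        simp at this
        rcases this with h|h|h
        · exact absurd h (Finset.mem_erase.mp hK).1
        · exact Or.inl h
        · exact Or.inr h
      rcases this with rfl | rfl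
      · right; exact h2
      · left; exact h1
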